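/- For all real x ∈ [e, 2e), one has x + x²/4 − e^{x/e} ≥ e²/4 + (2 − e/4)(x − e), and in particular x + x²/4 − e^{x/e} ≥ 0. -/

import Mathlib

open Real

lemma keyA (s : ℝ) (hs0 : 0 ≤ s) (hs1 : s ≤ 0.53) :
    Real.exp s ≤ 1 + (3 * Real.exp 1 / 4 - 1) * s + (Real.exp 1 / 4) * s ^ 2 := by
  have hb := Real.exp_bound' hs0 (le_trans hs1 (by norm_num)) (n := 4) (by norm_num)
  simp [Finset.sum_range_succ] at hb
  norm_num [Nat.factorial] at hb
  have he : (2.7182818283 : ℝ) < Real.exp 1 := Real.exp_one_gt_d9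
  have h2 : s^2 ≥ 0 := sq_nonneg s
  have h3 : s^3 ≤ 0.53 * s^2 := by nlinarith
  have h4 : s^4 ≤ 0.2809 * s^2 := by nlinarith [pow_le_pow_left₀ hs0 hs1 4]
  nlinarith [mul_nonneg hs0 (sub_nonneg.2 he.le), mul_nonneg h2 (sub_nonneg.2 he.le)]

lemma keyB (s : ℝ) (hs0 : 0.53 ≤ s) (hs1 : s < 1) :
    Real.exp s ≤ 1 + (3 * Real.exp 1 / 4 - 1) * s + (Real.exp 1 / 4) * s ^ 2 := by
  set u : ℝ := 1 - s with hu
  have hu0 : 0 < u := by simp [hu]; linarith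
  have hu1 : u ≤ 0.47 := by simp [hu]; linarith
  have habs : |(-u)| ≤ 1 := by rw [abs_neg, abs_of_pos hu0]; linarith
  have hb := Real.exp_bound habs (n := 4) (by norm_num)
  simp [Finset.sum_range_succ, abs_neg, abs_of_pos hu0] at hb
  norm_num [Nat.factorial] at hb
  have hb' : Real.exp (-u) ≤ 1 - u + u^2/2 - u^3/6 + 5*u^4/96 := by
    have := (abs_sub_le_iff.1 hb).1
    nlinarith [this]
  have hs : Real.exp s = Real.exp 1 * Real.exp (-u) := by
    rw [← Real.exp_add]; ring_nf
    rw [hu]; ring_nf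
  have he1 : Real.exp 1 < 2.7182818286 := Real.exp_one_lt_d9
  have he2 : (2.7182818283 : ℝ) < Real.exp 1 := Real.exp_one_gt_d9
  rw [hs]
  have hE : 0 < Real.exp 1 := Real.exp_pos 1
  have h2 : (0:ℝ) ≤ u^2 := sq_nonneg u
  have h3 : (0:ℝ) ≤ u^3 := by positivity
  have h4 : u^4 ≤ 0.47 * u^3 := by nlinarith [mul_nonneg (sub_nonneg.2 hu1) h3]
  have h3' : u^3 ≤ 0.47 * u^2 := by nlinarith [mul_nonneg (sub_nonneg.2 hu1) h2]
  calc Real.exp 1 * Real.exp (-u) ≤ Real.exp 1 * (1 - u + u^2/2 - u^3/6 + 5*u^4/96) :=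
        mul_le_mul_of_nonneg_left hb' (le_of_lt hE)
    _ ≤ 1 + (3 * Real.exp 1 / 4 - 1) * s + (Real.exp 1 / 4) * s ^ 2 := by
        have hsu : s = 1 - u := by simp [hu]
        rw [hsu]
        nlinarith [mul_nonneg hu0.le (sq_nonneg (u - 0.879)),
          mul_nonneg hu0.le (sub_nonneg.2 he1.le), mul_nonneg hu0.le (sub_nonneg.2 he2.le),
          mul_nonneg h2 (sub_nonneg.2 he1.le), mul_nonneg h2 (sub_nonneg.2 he2.le),
          mul_nonneg h3 (sub_nonneg.2 he1.le), mul_nonneg h3 (sub_nonneg.2 he2.le),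
          mul_nonneg (mul_nonneg h3 hu0.le) (sub_nonneg.2 he1.le)]

theorem stmt8 (x : ℝ) (h0 : Real.exp 1 ≤ x) (h1 : x < 2 * Real.exp 1) :
    (Real.exp 1) ^ 2 / 4 + (2 - Real.exp 1 / 4) * (x - Real.exp 1)
        ≤ x + x ^ 2 / 4 - Real.exp (x / Real.exp 1)
      ∧ 0 ≤ x + x ^ 2 / 4 - Real.exp (x / Real.exp 1) := by
  have hE : (0:ℝ) < Real.exp 1 := Real.exp_pos 1
  set s : ℝ := x / Real.exp 1 - 1 with hsdef
  have hx : x = Real.exp 1 * (s + 1) := by rw [hsdef]; field_simp; ring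
  have hs0 : 0 ≤ s := by
    rw [hsdef]
    have := (one_le_div hE).2 h0
    linarith
  have hs1 : s < 1 := by
    rw [hsdef]
    have : x / Real.exp 1 < 2 := (div_lt_iff₀ hE).2 (by linarith)
    linarith
  have hexp : Real.exp (x / Real.exp 1) = Real.exp 1 * Real.exp s := by
    rw [← Real.exp_add]
    congr 1
    rw [hsdef]; field_simp; ring
  have key : Real.exp s ≤ 1 + (3 * Real.exp 1 / 4 - 1) * s + (Real.exp 1 / 4) * s ^ 2 := by
    rcases le_total s 0.53 with h | h
    · exact keyA s hs0 h
    · exact keyB s h hs1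
  have h1' : (Real.exp 1) ^ 2 / 4 + (2 - Real.exp 1 / 4) * (x - Real.exp 1)
      ≤ x + x ^ 2 / 4 - Real.exp (x / Real.exp 1) := by
    rw [hexp, hx]
    nlinarith [mul_le_mul_of_nonneg_left key hE.le]
  refine ⟨h1', ?_⟩
  have he2 : (2.7182818283 : ℝ) < Real.exp 1 := Real.exp_one_gt_d9
  nlinarith [h1', sq_nonneg (Real.exp 1)]
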